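/- Let (A, μ, α) be a Hom-algebra over a field k of characteristic 0 and let β : A → A be a morphism of Hom-algebras from A to itself (i.e., β(xy) = β(x)β(y) and βα = αβ). Define the Hom-algebra A_β = (A, μ_β, βα) where μ_β(x,y) = β(xy). Then: (1) if A is multiplicative, so is A_β; (2) for all x ∈ A and n ≥ 1, the n-th Hom-power of x in A_β equals β^{n-1}(x^n), where x^n is the n-th Hom-power in A; (3) if A is n-th Hom-power associative, then so is A_β, and hence if A is Hom-power associative, so is A_β. -/

import Mathlib

variable {k A : Type*} [Field k] [CharZero k] [AddCommGroup A] [Module k A]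

/-- The `n`-th Hom-power: `x^1 = x`, `x^n = x^{n-1} · α^{n-2}(x)`. -/
def homPow (μ : A →ₗ[k] A →ₗ[k] A) (α : A →ₗ[k] A) (x : A) : ℕ → A
  | 0 => x
  | 1 => x
  | n + 2 => μ (homPow μ α x (n + 1)) ((α ^ n) x)

/-- `A` is `n`-th Hom-power associative. -/
def IsNthHomPowerAssoc (μ : A →ₗ[k] A →ₗ[k] A) (α : A →ₗ[k] A) (n : ℕ) : Prop :=
  ∀ (x : A) (i : ℕ), 1 ≤ i → i ≤ n - 1 →
    homPow μ α x n =
      μ ((α ^ (n - i - 1)) (homPow μ α x i)) ((α ^ (i - 1)) (homPow μ α x (n - i)))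

/-- `A` is Hom-power associative. -/
def IsHomPowerAssoc (μ : A →ₗ[k] A →ₗ[k] A) (α : A →ₗ[k] A) : Prop :=
  ∀ n : ℕ, 2 ≤ n → IsNthHomPowerAssoc μ α n

/-- `A` is up to `n`-th Hom-power associative. -/
def IsUpToNthHomPowerAssoc (μ : A →ₗ[k] A →ₗ[k] A) (α : A →ₗ[k] A) (n : ℕ) : Prop :=
  ∀ m : ℕ, 2 ≤ m → m ≤ n → IsNthHomPowerAssoc μ α m

/-- The Hom-algebra `(A, μ, α)` is multiplicative. -/
def IsMultiplicative (μ : A →ₗ[k] A →ₗ[k] A) (α : A →ₗ[k] A) : Prop :=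
  ∀ x y : A, α (μ x y) = μ (α x) (α y)

section Aux

variable (μ : A →ₗ[k] A →ₗ[k] A) (α β : A →ₗ[k] A)

lemma aux_c1 (hβα : ∀ x : A, β (α x) = α (β x)) :
    ∀ (b : ℕ) (x : A), α ((β ^ b) x) = (β ^ b) (α x) := by
  intro b
  induction b with
  | zero => simp
  | succ b ih =>
    intro x
    simp only [pow_succ, Module.End.mul_apply]
    rw [hβα x]
    exact ih (β x)

lemma aux_c (hβα : ∀ x : A, β (α x) = α (β x)) :
    ∀ (a b : ℕ) (x : A), (α ^ a) ((β ^ b) x) = (β ^ b) ((α ^ a) x) := by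
  intro a
  induction a with
  | zero => simp
  | succ a ih =>
    intro b x
    simp only [pow_succ', Module.End.mul_apply]
    rw [ih, aux_c1 α β hβα]

lemma aux_m (hβμ : ∀ x y : A, β (μ x y) = μ (β x) (β y)) :
    ∀ (m : ℕ) (x y : A), (β ^ m) (μ x y) = μ ((β ^ m) x) ((β ^ m) y) := by
  intro m
  induction m with
  | zero => simp
  | succ m ih =>
    intro x y
    simp only [pow_succ', Module.End.mul_apply]
    rw [ih, hβμ]

lemma aux_pow (hβα : ∀ x : A, β (α x) = α (β x)) :
    ∀ (n : ℕ) (x : A), ((β ∘ₗ α) ^ n) x = (β ^ n) ((α ^ n) x) := by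
  intro n
  induction n with
  | zero => simp
  | succ n ih =>
    intro x
    simp only [pow_succ', Module.End.mul_apply, LinearMap.comp_apply]
    rw [ih, aux_c1 α β hβα]

lemma aux_homPow (hβμ : ∀ x y : A, β (μ x y) = μ (β x) (β y))
    (hβα : ∀ x : A, β (α x) = α (β x)) :
    ∀ (n : ℕ) (x : A),
      homPow (μ.compr₂ β) (β ∘ₗ α) x n = (β ^ (n - 1)) (homPow μ α x n)
  | 0, x => by simp [homPow]
  | 1, x => by simp [homPow]
  | (n + 2), x => by
    have ih := aux_homPow hβμ hβα (n + 1) x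
    simp only [homPow, LinearMap.compr₂_apply] at *
    rw [ih, aux_pow α β hβα]
    simp only [Nat.add_sub_cancel] at *
    rw [← aux_m μ β hβμ n]
    simp [pow_succ', Module.End.mul_apply]

end Aux

/-- Theorem: twisting a Hom-power associative algebra along a self-morphism `β`
yields the Hom-algebra `A_β = (A, μ_β = β∘μ, βα)`, which is (1) multiplicative if `A` is,
(2) has Hom-powers `(x^n)' = β^{n-1}(x^n)`, and (3) is (n-th) Hom-power associative if `A` is. -/
theorem stmt0 (μ : A →ₗ[k] A →ₗ[k] A) (α β : A →ₗ[k] A)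
    (hβμ : ∀ x y : A, β (μ x y) = μ (β x) (β y))
    (hβα : ∀ x : A, β (α x) = α (β x)) :
    (IsMultiplicative μ α → IsMultiplicative (μ.compr₂ β) (β ∘ₗ α)) ∧
    (∀ (x : A) (n : ℕ), 1 ≤ n →
      homPow (μ.compr₂ β) (β ∘ₗ α) x n = (β ^ (n - 1)) (homPow μ α x n)) ∧
    (∀ n : ℕ, IsNthHomPowerAssoc μ α n → IsNthHomPowerAssoc (μ.compr₂ β) (β ∘ₗ α) n) ∧
    (IsHomPowerAssoc μ α → IsHomPowerAssoc (μ.compr₂ β) (β ∘ₗ α)) := by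
  have key : ∀ n : ℕ, IsNthHomPowerAssoc μ α n →
      IsNthHomPowerAssoc (μ.compr₂ β) (β ∘ₗ α) n := by
    intro n hA x i h1 h2
    have hn : 2 ≤ n := by omega
    have hni : 1 ≤ n - i := by omega
    rw [aux_homPow μ α β hβμ hβα, aux_homPow μ α β hβμ hβα,
      aux_homPow μ α β hβμ hβα, LinearMap.compr₂_apply,
      aux_pow α β hβα, aux_pow α β hβα,
      aux_c α β hβα (n - i - 1) (i - 1), aux_c α β hβα (i - 1) (n - i - 1),
      ← Module.End.mul_apply (β ^ (n - i - 1)) (β ^ (i - 1)),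
      ← Module.End.mul_apply (β ^ (i - 1)) (β ^ (n - i - 1)),
      ← pow_add, ← pow_add]
    have e1 : n - i - 1 + (i - 1) = n - 2 := by omega
    have e2 : i - 1 + (n - i - 1) = n - 2 := by omega
    rw [e1, e2, ← aux_m μ β hβμ, ← hA x i h1 h2]
    have e3 : n - 1 = (n - 2) + 1 := by omega
    rw [e3, pow_succ', Module.End.mul_apply]
  refine ⟨?_, ?_, key, ?_⟩
  · intro h x y
    simp only [LinearMap.compr₂_apply, LinearMap.comp_apply]
    rw [← hβα, h, hβμ]
  · intro x n _
    exact aux_homPow μ α β hβμ hβα n x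
  · intro h n hn
    exact key n (h n hn)
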